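/- A sequence of positions [i_1,j_1]-[i_1,j_2]-[i_2,j_2]-[i_2,j_3]-[i_3,j_3]-[i_3,j_1] with distinct rows i_1,i_2,i_3 and distinct columns j_1,j_2,j_3 in a protograph B lifted by circulants of size z with power matrix C = [c_{i,j}] yields z cycles of length 6 in the lifted matrix if and only if c_{i1,j1} - c_{i1,j2} + c_{i2,j2} - c_{i2,j3} + c_{i3,j3} - c_{i3,j1} ≡ 0 (mod z), and yields no 6-cycles in the lifted matrix otherwise. -/

import Mathlib

/-- Adjacency in the circulant lifting of a protograph `B` with power matrix `C` and
circulant size `z`: the copy `u` of check (row) node `i` is connected to the copy `v` of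
variable (column) node `j` iff `B i j = 1` and `u ≡ v + c_{i,j} (mod z)`. -/
def liftedAdj {γ κ : ℕ} (z : ℕ) (B : Matrix (Fin γ) (Fin κ) Bool)
    (C : Matrix (Fin γ) (Fin κ) ℕ) (i : Fin γ) (u : Fin z) (j : Fin κ) (v : Fin z) :
    Prop :=
  B i j = true ∧ ((u : ℕ) : ZMod z) = ((v : ℕ) : ZMod z) + ((C i j : ℕ) : ZMod z)

instance {γ κ z : ℕ} (B : Matrix (Fin γ) (Fin κ) Bool) (C : Matrix (Fin γ) (Fin κ) ℕ)
    (i : Fin γ) (u : Fin z) (j : Fin κ) (v : Fin z) :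
    Decidable (liftedAdj z B C i u j v) :=
  inferInstanceAs (Decidable (_ ∧ _))

/-- A 6-cycle `[i₁,j₁]-[i₁,j₂]-[i₂,j₂]-[i₂,j₃]-[i₃,j₃]-[i₃,j₁]` of the
protograph `B` (distinct rows, distinct columns, all six entries equal to 1) yields
exactly `z` cycles of length 6 in the matrix lifted with circulant size `z` and power
matrix `C` if `c_{i₁,j₁} - c_{i₁,j₂} + c_{i₂,j₂} - c_{i₂,j₃} + c_{i₃,j₃} - c_{i₃,j₁} ≡ 0
(mod z)`, and yields no 6-cycles otherwise. -/
theorem stmt17 (γ κ z : ℕ) (hz : 0 < z)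
    (B : Matrix (Fin γ) (Fin κ) Bool) (C : Matrix (Fin γ) (Fin κ) ℕ)
    (i1 i2 i3 : Fin γ) (j1 j2 j3 : Fin κ)
    (hi12 : i1 ≠ i2) (hi13 : i1 ≠ i3) (hi23 : i2 ≠ i3)
    (hj12 : j1 ≠ j2) (hj13 : j1 ≠ j3) (hj23 : j2 ≠ j3)
    (hB : B i1 j1 = true ∧ B i1 j2 = true ∧ B i2 j2 = true ∧ B i2 j3 = true ∧
      B i3 j3 = true ∧ B i3 j1 = true) :
    (Finset.univ.filter fun t : (Fin z × Fin z × Fin z) × (Fin z × Fin z × Fin z) =>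
        liftedAdj z B C i1 t.1.1 j1 t.2.1 ∧ liftedAdj z B C i1 t.1.1 j2 t.2.2.1 ∧
        liftedAdj z B C i2 t.1.2.1 j2 t.2.2.1 ∧ liftedAdj z B C i2 t.1.2.1 j3 t.2.2.2 ∧
        liftedAdj z B C i3 t.1.2.2 j3 t.2.2.2 ∧ liftedAdj z B C i3 t.1.2.2 j1 t.2.1).card =
      if (z : ℤ) ∣ ((C i1 j1 : ℤ) - C i1 j2 + C i2 j2 - C i2 j3 + C i3 j3 - C i3 j1)
      then z else 0 := by
  haveI : NeZero z := ⟨hz.ne'⟩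
  obtain ⟨h1, h2, h3, h4, h5, h6⟩ := hB
  set g : ZMod z → Fin z := fun a => ⟨a.val, ZMod.val_lt a⟩ with hgdef
  have hg1 : ∀ a : ZMod z, ((g a : ℕ) : ZMod z) = a := fun a => ZMod.natCast_rightInverse a
  have hg2 : ∀ u : Fin z, g (((u : ℕ) : ZMod z)) = u := fun u =>
    Fin.ext (ZMod.val_natCast_of_lt u.isLt)
  by_cases hd : (z : ℤ) ∣ ((C i1 j1 : ℤ) - C i1 j2 + C i2 j2 - C i2 j3 + C i3 j3 - C i3 j1)
  · rw [if_pos hd]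
    have hzero : ((C i1 j1 : ZMod z) - C i1 j2 + C i2 j2 - C i2 j3 + C i3 j3 - C i3 j1) = 0 := by
      have h0 := (ZMod.intCast_zmod_eq_zero_iff_dvd _ z).2 hd
      push_cast at h0
      exact h0
    trans (Finset.univ : Finset (Fin z)).card
    swap
    · rw [Finset.card_univ, Fintype.card_fin]
    refine Finset.card_nbij' (fun t => t.2.1)
      (fun v => ((g (((v : ℕ) : ZMod z) + C i1 j1),
                  g (((v : ℕ) : ZMod z) + C i1 j1 - C i1 j2 + C i2 j2),
                  g (((v : ℕ) : ZMod z) + C i1 j1 - C i1 j2 + C i2 j2 - C i2 j3 + C i3 j3)),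
                 (v, g (((v : ℕ) : ZMod z) + C i1 j1 - C i1 j2),
                  g (((v : ℕ) : ZMod z) + C i1 j1 - C i1 j2 + C i2 j2 - C i2 j3))))
      (fun t _ => Finset.mem_univ _) ?_ ?_ (fun t _ => rfl)
    · intro v _
      simp only [Finset.mem_coe, Finset.mem_filter, Finset.mem_univ, true_and]
      refine ⟨⟨h1, ?_⟩, ⟨h2, ?_⟩, ⟨h3, ?_⟩, ⟨h4, ?_⟩, ⟨h5, ?_⟩, ⟨h6, ?_⟩⟩ <;>
        simp only [hg1] <;> try ring
      linear_combination hzero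
    · intro t ht
      replace ht := Finset.mem_filter.1 ht
      simp only [Finset.mem_coe, Finset.mem_filter, Finset.mem_univ, true_and, liftedAdj] at ht
      obtain ⟨⟨_, e1⟩, ⟨_, e2⟩, ⟨_, e3⟩, ⟨_, e4⟩, ⟨_, e5⟩, ⟨_, e6⟩⟩ := ht
      have p1 : g (((t.2.1 : ℕ) : ZMod z) + C i1 j1) = t.1.1 := by rw [← e1, hg2]
      have p2 : g (((t.2.1 : ℕ) : ZMod z) + C i1 j1 - C i1 j2) = t.2.2.1 := by
        have h : ((t.2.1 : ℕ) : ZMod z) + C i1 j1 - C i1 j2 = ((t.2.2.1 : ℕ) : ZMod z) := by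
          linear_combination e2 - e1
        rw [h, hg2]
      have p3 : g (((t.2.1 : ℕ) : ZMod z) + C i1 j1 - C i1 j2 + C i2 j2) = t.1.2.1 := by
        have h : ((t.2.1 : ℕ) : ZMod z) + C i1 j1 - C i1 j2 + C i2 j2
            = ((t.1.2.1 : ℕ) : ZMod z) := by linear_combination e2 - e1 - e3
        rw [h, hg2]
      have p4 : g (((t.2.1 : ℕ) : ZMod z) + C i1 j1 - C i1 j2 + C i2 j2 - C i2 j3)
          = t.2.2.2 := by
        have h : ((t.2.1 : ℕ) : ZMod z) + C i1 j1 - C i1 j2 + C i2 j2 - C i2 j3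
            = ((t.2.2.2 : ℕ) : ZMod z) := by linear_combination e2 - e1 - e3 + e4
        rw [h, hg2]
      have p5 : g (((t.2.1 : ℕ) : ZMod z) + C i1 j1 - C i1 j2 + C i2 j2 - C i2 j3 + C i3 j3)
          = t.1.2.2 := by
        have h : ((t.2.1 : ℕ) : ZMod z) + C i1 j1 - C i1 j2 + C i2 j2 - C i2 j3 + C i3 j3
            = ((t.1.2.2 : ℕ) : ZMod z) := by linear_combination e2 - e1 - e3 + e4 - e5
        rw [h, hg2]
      exact Prod.ext (Prod.ext p1 (Prod.ext p3 p5)) (Prod.ext rfl (Prod.ext p2 p4))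
  · rw [if_neg hd]
    rw [Finset.card_eq_zero, Finset.filter_eq_empty_iff]
    intro t _
    rintro ⟨⟨_, e1⟩, ⟨_, e2⟩, ⟨_, e3⟩, ⟨_, e4⟩, ⟨_, e5⟩, ⟨_, e6⟩⟩
    apply hd
    rw [← ZMod.intCast_zmod_eq_zero_iff_dvd]
    push_cast
    linear_combination -e1 + e2 - e3 + e4 - e5 + e6
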